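/- Unique solution of the generalized Bellman equation of ETD(λ): let P be a k×k row-stochastic matrix (nonnegative entries, each row summing to 1), γ ∈ (0,1), λ ∈ [0,1], and r ∈ ℝ^k. Then I − γλP is invertible; defining P^λ = I − (I − γλP)⁻¹(I − γP) and r^λ = (I − γλP)⁻¹ r, the matrix I − P^λ is invertible and the generalized Bellman equation v = r^λ + P^λ v has the unique solution v = (I − γP)⁻¹ r. -/

import Mathlib

open Matrix

lemma stoch_unit (k : ℕ) (P : Matrix (Fin k) (Fin k) ℝ)
    (hP0 : ∀ i j, 0 ≤ P i j) (hP1 : ∀ i, ∑ j, P i j = 1)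
    (c : ℝ) (hc0 : 0 ≤ c) (hc1 : c < 1) : IsUnit (1 - c • P) := by
  rw [← Matrix.mulVec_injective_iff_isUnit]
  have : Function.Injective (Matrix.mulVecLin (1 - c • P)) := by
    rw [injective_iff_map_eq_zero]
    intro v hv
    have hv' : v = c • (P *ᵥ v) := by
      have := hv
      simp only [Matrix.mulVecLin_apply, Matrix.sub_mulVec, Matrix.one_mulVec,
        Matrix.smul_mulVec, sub_eq_zero] at this
      exact this
    rcases isEmpty_or_nonempty (Fin k) with h | h
    · exact funext fun i => h.elim i
    obtain ⟨i, -, hi⟩ := Finset.exists_max_image Finset.univ (fun j => |v j|)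
      ⟨Classical.arbitrary (Fin k), Finset.mem_univ _⟩
    have hmax : ∀ j, |v j| ≤ |v i| := fun j => hi j (Finset.mem_univ j)
    have hle : |v i| ≤ c * |v i| := by
      calc |v i| = |c * ∑ j, P i j * v j| := by
            conv_lhs => rw [hv']
            rfl
        _ ≤ c * ∑ j, P i j * |v j| := by
            rw [abs_mul, abs_of_nonneg hc0]
            apply mul_le_mul_of_nonneg_left _ hc0
            refine (Finset.abs_sum_le_sum_abs _ _).trans ?_
            apply Finset.sum_le_sum
            intro j _
            rw [abs_mul, abs_of_nonneg (hP0 i j)]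
        _ ≤ c * ∑ j, P i j * |v i| := by
            apply mul_le_mul_of_nonneg_left _ hc0
            exact Finset.sum_le_sum fun j _ =>
              mul_le_mul_of_nonneg_left (hmax j) (hP0 i j)
        _ = c * |v i| := by rw [← Finset.sum_mul, hP1 i, one_mul]
    have hvi : |v i| = 0 := by nlinarith [abs_nonneg (v i)]
    funext j
    have := hmax j
    have : |v j| ≤ 0 := hvi ▸ this
    exact abs_nonpos_iff.mp this
  exact this

theorem etd_generalized_bellman_unique_solution
    (k : ℕ) (P : Matrix (Fin k) (Fin k) ℝ)
    (hP0 : ∀ i j, 0 ≤ P i j) (hP1 : ∀ i, ∑ j, P i j = 1)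
    (γ lam : ℝ) (hγ0 : 0 < γ) (hγ1 : γ < 1) (hlam0 : 0 ≤ lam) (hlam1 : lam ≤ 1)
    (r : Fin k → ℝ)
    (Pl : Matrix (Fin k) (Fin k) ℝ)
    (hPl : Pl = 1 - (1 - (γ * lam) • P)⁻¹ * (1 - γ • P))
    (rl : Fin k → ℝ)
    (hrl : rl = (1 - (γ * lam) • P)⁻¹ *ᵥ r) :
    IsUnit (1 - (γ * lam) • P)
    ∧ IsUnit (1 - Pl)
    ∧ ∀ v : Fin k → ℝ, (v = rl + Pl *ᵥ v ↔ v = (1 - γ • P)⁻¹ *ᵥ r) := by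
  set A : Matrix (Fin k) (Fin k) ℝ := 1 - (γ * lam) • P with hA
  set B : Matrix (Fin k) (Fin k) ℝ := 1 - γ • P with hB
  have hAunit : IsUnit A := stoch_unit k P hP0 hP1 (γ * lam)
    (mul_nonneg hγ0.le hlam0)
    (lt_of_le_of_lt (by nlinarith) hγ1)
  have hBunit : IsUnit B := stoch_unit k P hP0 hP1 γ hγ0.le hγ1
  have hAinv : IsUnit A⁻¹ := by
    rw [Matrix.isUnit_nonsing_inv_iff]; exact hAunit
  have h1Pl : 1 - Pl = A⁻¹ * B := by rw [hPl, sub_sub_cancel]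
  refine ⟨hAunit, by rw [h1Pl]; exact hAinv.mul hBunit, fun v => ?_⟩
  have key : (v = rl + Pl *ᵥ v) ↔ (1 - Pl) *ᵥ v = rl := by
    constructor
    · intro h
      rw [Matrix.sub_mulVec, Matrix.one_mulVec]
      exact sub_eq_of_eq_add h
    · intro h
      rw [Matrix.sub_mulVec, Matrix.one_mulVec, sub_eq_iff_eq_add] at h
      exact h
  rw [key, h1Pl, hrl, ← Matrix.mulVec_mulVec]
  have hAinj : Function.Injective (A⁻¹ *ᵥ ·) := Matrix.mulVec_injective_iff_isUnit.mpr hAinv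
  have hdet : IsUnit B.det := (Matrix.isUnit_iff_isUnit_det B).mp hBunit
  constructor
  · intro h
    have hBv : B *ᵥ v = r := hAinj h
    have := congrArg (fun w => B⁻¹ *ᵥ w) hBv
    simpa [Matrix.mulVec_mulVec, Matrix.nonsing_inv_mul B hdet] using this
  · intro h
    rw [h, Matrix.mulVec_mulVec, Matrix.mulVec_mulVec, Matrix.mul_assoc,
      Matrix.mul_nonsing_inv B hdet, Matrix.mul_one]
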